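/- For all integers d ≥ 1 and k with 0 ≤ k ≤ d − 1, the following identity holds in the rational numbers: Σ_{j=0}^{d−1−k} (−1)^{j + d − 1 − k} · d! / ((d − j) · k! · (d − 1 − k − j)! · j!) = 1. -/

import Mathlib

private lemma aux_sum (m : ℕ) : ∀ k : ℕ,
    ∑ i ∈ Finset.range (m + 1), (-1 : ℚ) ^ i * (m.choose i : ℚ) / ((k : ℚ) + 1 + i)
      = (m.factorial : ℚ) * (k.factorial : ℚ) / ((m + k + 1).factorial : ℚ) := by
  induction m with
  | zero =>
      intro k
      have hk : ((k.factorial : ℚ)) ≠ 0 := by positivity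
      have hk1 : ((k : ℚ) + 1) ≠ 0 := by positivity
      simp only [Finset.sum_range_one, pow_zero, Nat.choose_self, Nat.cast_one, one_mul,
        Nat.cast_zero, add_zero, zero_add, Nat.factorial_one, Nat.factorial_succ]
      push_cast
      field_simp
      simp
  | succ m ih =>
      intro k
      rw [Finset.sum_range_succ']
      have hsplit : ∀ i ∈ Finset.range (m + 1),
          (-1 : ℚ) ^ (i + 1) * ((m + 1).choose (i + 1) : ℚ) / ((k : ℚ) + 1 + ((i + 1 : ℕ) : ℚ))
            = -((-1 : ℚ) ^ i * (m.choose i : ℚ) / (((k + 1 : ℕ) : ℚ) + 1 + i))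
              + -((-1 : ℚ) ^ i * (m.choose (i + 1) : ℚ) / ((k : ℚ) + 1 + ((i + 1 : ℕ) : ℚ))) := by
        intro i hi
        rw [Nat.choose_succ_succ]
        push_cast
        ring
      rw [Finset.sum_congr rfl hsplit, Finset.sum_add_distrib]
      -- first block
      have h1 : ∑ i ∈ Finset.range (m + 1),
          -((-1 : ℚ) ^ i * (m.choose i : ℚ) / (((k + 1 : ℕ) : ℚ) + 1 + i))
          = -((m.factorial : ℚ) * ((k + 1).factorial : ℚ) / ((m + (k + 1) + 1).factorial : ℚ)) := by
        rw [← neg_eq_iff_eq_neg, ← ih (k + 1)]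
        simp
      -- second block
      have key := ih k
      rw [show m + 1 = (m + 1 - 1) + 1 from rfl] at key
      have key2 : ∑ i ∈ Finset.range (m + 2),
          (-1 : ℚ) ^ i * (m.choose i : ℚ) / ((k : ℚ) + 1 + i)
          = (m.factorial : ℚ) * (k.factorial : ℚ) / ((m + k + 1).factorial : ℚ) := by
        rw [Finset.sum_range_succ, ih k]
        simp [Nat.choose_eq_zero_of_lt (Nat.lt_succ_self m)]
      rw [Finset.sum_range_succ'] at key2
      have h2 : ∑ i ∈ Finset.range (m + 1),
          -((-1 : ℚ) ^ i * (m.choose (i + 1) : ℚ) / ((k : ℚ) + 1 + ((i + 1 : ℕ) : ℚ)))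
          = (m.factorial : ℚ) * (k.factorial : ℚ) / ((m + k + 1).factorial : ℚ)
            - 1 / ((k : ℚ) + 1) := by
        have e : ∑ i ∈ Finset.range (m + 1),
            -((-1 : ℚ) ^ i * (m.choose (i + 1) : ℚ) / ((k : ℚ) + 1 + ((i + 1 : ℕ) : ℚ)))
            = ∑ i ∈ Finset.range (m + 1),
              (-1 : ℚ) ^ (i + 1) * (m.choose (i + 1) : ℚ) / ((k : ℚ) + 1 + ((i + 1 : ℕ) : ℚ)) := by
          apply Finset.sum_congr rfl
          intro i _
          ring
        rw [e]
        have f0 : (-1 : ℚ) ^ 0 * (m.choose 0 : ℚ) / ((k : ℚ) + 1 + ((0 : ℕ) : ℚ))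
            = 1 / ((k : ℚ) + 1) := by norm_num
        rw [f0] at key2
        linarith [key2]
      rw [h1, h2]
      -- now pure arithmetic with factorials
      have f0' : (-1 : ℚ) ^ 0 * (((m + 1).choose 0 : ℕ) : ℚ) / ((k : ℚ) + 1 + ((0 : ℕ) : ℚ))
          = 1 / ((k : ℚ) + 1) := by norm_num
      rw [f0']
      have e1 : ((m + (k + 1) + 1).factorial : ℚ) = ((m + k + 2 : ℕ) : ℚ) * ((m + k + 1).factorial : ℚ) := by
        rw [show m + (k + 1) + 1 = (m + k + 1) + 1 from by ring, Nat.factorial_succ]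
        push_cast; ring
      have e2 : (((k + 1).factorial : ℕ) : ℚ) = ((k + 1 : ℕ) : ℚ) * (k.factorial : ℚ) := by
        rw [Nat.factorial_succ]; push_cast; ring
      have e3 : (((m + 1) + k + 1).factorial : ℚ) = ((m + k + 2 : ℕ) : ℚ) * ((m + k + 1).factorial : ℚ) := by
        rw [show (m + 1) + k + 1 = (m + k + 1) + 1 from by ring, Nat.factorial_succ]
        push_cast; ring
      have e4 : (((m + 1).factorial : ℕ) : ℚ) = ((m + 1 : ℕ) : ℚ) * (m.factorial : ℚ) := by
        rw [Nat.factorial_succ]; push_cast; ring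
      rw [e1, e2, e3, e4]
      have p1 : ((m + k + 1).factorial : ℚ) ≠ 0 := by positivity
      have p2 : ((m + k + 2 : ℕ) : ℚ) ≠ 0 := by positivity
      have p3 : ((k : ℚ) + 1) ≠ 0 := by positivity
      push_cast
      field_simp
      ring

private lemma aux_sum2 (m k : ℕ) :
    ∑ i ∈ Finset.range (m + 1), (-1 : ℚ) ^ i * ((m + k + 1).factorial : ℚ) /
        (((k + 1 + i : ℕ) : ℚ) * (k.factorial : ℚ) * ((m - i).factorial : ℚ) * (i.factorial : ℚ))
      = 1 := by
  have h := aux_sum m k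
  have hD : ((m + k + 1).factorial : ℚ) ≠ 0 := by positivity
  have hm : ((m.factorial : ℚ)) ≠ 0 := by positivity
  have hk : ((k.factorial : ℚ)) ≠ 0 := by positivity
  have scale := congrArg (fun x : ℚ => x * (((m + k + 1).factorial : ℚ) / ((m.factorial : ℚ) * (k.factorial : ℚ)))) h
  simp only [Finset.sum_mul] at scale
  have rhs1 : (m.factorial : ℚ) * (k.factorial : ℚ) / ((m + k + 1).factorial : ℚ) *
      (((m + k + 1).factorial : ℚ) / ((m.factorial : ℚ) * (k.factorial : ℚ))) = 1 := by
    field_simp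
  rw [rhs1] at scale
  refine Eq.trans (Finset.sum_congr rfl fun i hi => ?_) scale
  have him : i ≤ m := Nat.lt_succ_iff.mp (Finset.mem_range.mp hi)
  have hchoose : (m.choose i : ℚ) = (m.factorial : ℚ) / ((i.factorial : ℚ) * ((m - i).factorial : ℚ)) :=
    Nat.cast_choose ℚ him
  rw [hchoose]
  have hii : ((i.factorial : ℚ)) ≠ 0 := by positivity
  have hmi : (((m - i).factorial : ℚ)) ≠ 0 := by positivity
  have hki : ((k : ℚ) + 1 + (i : ℚ)) ≠ 0 := by positivity
  have hcast : (((k + 1 + i : ℕ)) : ℚ) = (k : ℚ) + 1 + (i : ℚ) := by push_cast; ring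
  rw [hcast]
  field_simp

/-- The final combinatorial lemma of Appendix III (Eq. (cbl)):
for integers `d ≥ 1` and `0 ≤ k ≤ d − 1`,
`Σ_{j=0}^{d−1−k} (−1)^{j+d−1−k} d!/((d−j)·k!·(d−1−k−j)!·j!) = 1` in `ℚ`. -/
theorem appendix_combinatorial_identity (d k : ℕ) (hd : 1 ≤ d) (hk : k ≤ d - 1) :
    ∑ j ∈ Finset.range (d - k), ((-1 : ℚ)) ^ (j + d - 1 - k) * (d.factorial : ℚ) /
        (((d - j : ℕ) : ℚ) * (k.factorial : ℚ) * (((d - 1 - k - j).factorial : ℚ)) *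
          ((j.factorial : ℚ))) = 1 := by
  obtain ⟨m, rfl⟩ : ∃ m, d = m + k + 1 := ⟨d - 1 - k, by omega⟩
  rw [show m + k + 1 - k = m + 1 from by omega]
  rw [← Finset.sum_range_reflect]
  refine Eq.trans (Finset.sum_congr rfl fun j hj => ?_) (aux_sum2 m k)
  have hjm : j ≤ m := Nat.lt_succ_iff.mp (Finset.mem_range.mp hj)
  have e1 : m + 1 - 1 - j = m - j := by omega
  rw [e1]
  have e2 : (m - j) + (m + k + 1) - 1 - k = 2 * (m - j) + j := by omega
  rw [e2]
  have e3 : m + k + 1 - (m - j) = k + 1 + j := by omega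
  rw [e3]
  have e4 : m + k + 1 - 1 - k - (m - j) = j := by omega
  rw [e4]
  have e5 : ((-1 : ℚ)) ^ (2 * (m - j) + j) = (-1 : ℚ) ^ j := by
    rw [pow_add, pow_mul, neg_one_sq, one_pow, one_mul]
  rw [e5]
  ring
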